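/- No two distinct prime words u, v with |u| < |v| can have their squares u^2 and v^2 centered at the same inter-position of a string: if u^2 and v^2 are both centered at inter-position i of a word s, and both u and v are prime words, then u = v. -/

import Mathlib

def listPow {A : Type*} (r : List A) (k : ℕ) : List A :=
  (List.replicate k r).flatten

def Primitive {A : Type*} (u : List A) : Prop :=
  u ≠ [] ∧ ∀ (r : List A) (k : ℕ), u = listPow r k → u = r

def PrimeWord {A : Type*} [LinearOrder A] (u : List A) : Prop :=
  Primitive u ∧ ((∀ v, u ~r v → u ≤ v) ∨ (∀ v, u ~r v → v ≤ u))

def SquareCentered {A : Type*} (s x : List A) (i : ℕ) : Prop :=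
  x <:+ s.take i ∧ x <+: s.drop i

lemma listPow_append {A : Type*} (r : List A) (k l : ℕ) :
    listPow r k ++ listPow r l = listPow r (k + l) := by
  unfold listPow
  rw [List.replicate_add, List.flatten_append]

lemma listPow_length {A : Type*} (r : List A) (k : ℕ) :
    (listPow r k).length = k * r.length := by
  simp [listPow, Nat.mul_comm]

lemma comm_pow_aux {A : Type*} :
    ∀ (n : ℕ) (a b : List A), a.length + b.length ≤ n → a.length ≤ b.length →
      a ++ b = b ++ a → ∃ r k l, a = listPow r k ∧ b = listPow r l := by
  intro n
  induction n with
  | zero =>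
    intro a b h _ _
    have ha : a = [] := List.length_eq_zero_iff.1 (by omega)
    have hb : b = [] := List.length_eq_zero_iff.1 (by omega)
    exact ⟨[], 0, 0, by simp [ha, listPow], by simp [hb, listPow]⟩
  | succ n ih =>
    intro a b hn hle hc
    cases a with
    | nil =>
      exact ⟨b, 0, 1, by simp [listPow], by simp [listPow]⟩
    | cons x xs =>
      set a := x :: xs with ha
      have hab : a <+: b := by
        refine List.prefix_of_prefix_length_le ⟨b, rfl⟩ ?_ hle
        exact ⟨a, hc.symm⟩
      obtain ⟨c, rfl⟩ := hab
      have hc' : a ++ c = c ++ a :=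
        List.append_cancel_left (hc.trans (List.append_assoc a c a))
      have h1 : 1 ≤ a.length := by simp [ha]
      rw [List.length_append] at hn
      rcases Nat.le_total a.length c.length with h' | h'
      · obtain ⟨r, k, l, hA, hC⟩ := ih a c (by omega) h' hc'
        exact ⟨r, k, k + l, hA, by rw [hA, hC, listPow_append]⟩
      · obtain ⟨r, k, l, hC, hA⟩ := ih c a (by omega) h' hc'.symm
        exact ⟨r, l, l + k, hA, by rw [hA, hC, listPow_append]⟩

lemma comm_pow {A : Type*} {a b : List A} (hc : a ++ b = b ++ a) :
    ∃ r k l, a = listPow r k ∧ b = listPow r l := by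
  rcases Nat.le_total a.length b.length with h | h
  · exact comm_pow_aux (a.length + b.length) a b le_rfl h hc
  · obtain ⟨r, k, l, h1, h2⟩ := comm_pow_aux (b.length + a.length) b a le_rfl h hc.symm
    exact ⟨r, l, k, h2, h1⟩

lemma lex_append_right_of_length_eq {A : Type*} [LinearOrder A] :
    ∀ {a b : List A}, List.Lex (· < ·) a b → a.length = b.length →
      ∀ c : List A, List.Lex (· < ·) (a ++ c) (b ++ c) := by
  intro a b h
  induction h with
  | nil => intro h; simp at h
  | rel hab => intro _ c; exact List.Lex.rel hab
  | cons h ih =>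
    intro hl c
    exact List.Lex.cons (ih (by simpa using hl) c)

lemma lex_of_lex_append_left {A : Type*} [LinearOrder A] :
    ∀ (s : List A) {t₁ t₂ : List A},
      List.Lex (· < ·) (s ++ t₁) (s ++ t₂) → List.Lex (· < ·) t₁ t₂
  | [], _, _, h => h
  | a :: s, t₁, t₂, h => by
    rw [List.cons_append, List.cons_append] at h
    exact lex_of_lex_append_left s (List.lex_cons_iff.1 h)

lemma lt_iff_lex {A : Type*} [LinearOrder A] {a b : List A} :
    a < b ↔ List.Lex (· < ·) a b := Iff.rfl

lemma le_of_append_left_le {A : Type*} [LinearOrder A] {s t₁ t₂ : List A}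
    (h : s ++ t₁ ≤ s ++ t₂) : t₁ ≤ t₂ := by
  rcases eq_or_lt_of_le h with h | h
  · exact le_of_eq (List.append_cancel_left h)
  · exact le_of_lt (lt_iff_lex.2 (lex_of_lex_append_left s (lt_iff_lex.1 h)))

/-- A prime word has no nonempty proper border. -/
lemma prime_unbordered {A : Type*} [LinearOrder A] {v u : List A}
    (hv : PrimeWord v) (hune : u ≠ []) (hne : u ≠ v)
    (hp : u <+: v) (hs : u <:+ v) : False := by
  obtain ⟨w, hw⟩ := hp
  obtain ⟨w', hw'⟩ := hs
  have hwne : w ≠ [] := by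
    rintro rfl
    exact hne (by simpa using hw)
  have hlen : w.length = w'.length := by
    have := congrArg List.length (hw.trans hw'.symm)
    simp at this; omega
  -- v ~r w ++ u  and  v ~r u ++ w'
  have hrot1 : v ~r (w ++ u) := by rw [← hw]; exact List.isRotated_append
  have hrot2 : v ~r (u ++ w') := by rw [← hw']; exact List.isRotated_append
  have hww' : w = w' := by
    rcases hv.2 with hmin | hmax
    · have h1 : u ++ w ≤ u ++ w' := hw ▸ hmin _ hrot2
      have h2 : w ≤ w' := le_of_append_left_le h1
      rcases eq_or_lt_of_le h2 with h | h
      · exact h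
      · exfalso
        have h3 : w' ++ u ≤ w ++ u := hw' ▸ hmin _ hrot1
        have h4 : w ++ u < w' ++ u :=
          lt_iff_lex.2 (lex_append_right_of_length_eq (lt_iff_lex.1 h) hlen u)
        exact absurd h3 (not_le_of_gt h4)
    · have h1 : u ++ w' ≤ u ++ w := hw ▸ hmax _ hrot2
      have h2 : w' ≤ w := le_of_append_left_le h1
      rcases eq_or_lt_of_le h2 with h | h
      · exact h.symm
      · exfalso
        have h3 : w ++ u ≤ w' ++ u := hw' ▸ hmax _ hrot1
        have h4 : w' ++ u < w ++ u :=
          lt_iff_lex.2 (lex_append_right_of_length_eq (lt_iff_lex.1 h) hlen.symm u)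
        exact absurd h3 (not_le_of_gt h4)
  subst hww'
  -- now v = u ++ w = w ++ u
  have hcomm : u ++ w = w ++ u := hw.trans hw'.symm
  obtain ⟨r, k, l, hU, hW⟩ := comm_pow hcomm
  have hvpow : v = listPow r (k + l) := by rw [← listPow_append, ← hU, ← hW, hw]
  have hvr : v = r := hv.1.2 r (k + l) hvpow
  have hrne : r ≠ [] := by
    intro h
    exact hv.1.1 (by simp [hvr, h])
  have hk : 1 ≤ k := by
    by_contra h
    push_neg at h
    interval_cases k
    simp [listPow] at hU
    exact hune hU
  have hl : 1 ≤ l := by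
    by_contra h
    push_neg at h
    interval_cases l
    simp [listPow] at hW
    exact hwne hW
  have := congrArg List.length hvpow
  rw [hvr, listPow_length] at this
  have hr : 0 < r.length := List.length_pos_iff.2 hrne
  nlinarith

lemma centered_aux {A : Type*} [LinearOrder A]
    (s u v : List A) (i : ℕ) (hv : PrimeWord v)
    (hcu : SquareCentered s u i) (hcv : SquareCentered s v i)
    (hune : u ≠ []) (hle : u.length ≤ v.length) : u = v := by
  by_contra hne
  have hp : u <+: v := List.prefix_of_prefix_length_le hcu.2 hcv.2 hle
  have hs : u <:+ v := List.suffix_of_suffix_length_le hcu.1 hcv.1 hle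
  exact prime_unbordered hv hune hne hp hs

/-- Two prime words whose squares are centered at the same inter-position of a
word `s` must be equal. -/
theorem prime_squares_same_center_eq {A : Type*} [LinearOrder A]
    (s u v : List A) (i : ℕ) (hu : PrimeWord u) (hv : PrimeWord v)
    (hcu : SquareCentered s u i) (hcv : SquareCentered s v i) : u = v := by
  rcases Nat.le_total u.length v.length with h | h
  · exact centered_aux s u v i hv hcu hcv hu.1.1 h
  · exact (centered_aux s v u i hu hcv hcu hv.1.1 h).symm
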